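/- The Beta skew-normal distribution BSN(1, 1/2, 1) is the standard normal distribution: for all real x, (2 / B(1/2, 1)) · Φ(x; 1)^{−1/2} · φ(x) Φ(x) = φ(x), where B denotes the Beta function. -/

import Mathlib

open MeasureTheory

/-- Standard normal density. -/
noncomputable def normPdf (x : ℝ) : ℝ := Real.exp (-x ^ 2 / 2) / Real.sqrt (2 * Real.pi)

/-- Standard normal cdf. -/
noncomputable def normCdf (x : ℝ) : ℝ := ∫ t in Set.Iic x, normPdf t

/-- Skew-normal cdf with parameter `l`. -/
noncomputable def snCdf (l z : ℝ) : ℝ := ∫ t in Set.Iic z, 2 * normPdf t * normCdf (l * t)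

/-- The Beta function. -/
noncomputable def betaFn (a b : ℝ) : ℝ := Real.Gamma a * Real.Gamma b / Real.Gamma (a + b)

/-- The Beta skew-normal density with parameters `l`, `a`, `b`. -/
noncomputable def bsnPdf (l a b x : ℝ) : ℝ :=
  (2 / betaFn a b) * snCdf l x ^ (a - 1) * (1 - snCdf l x) ^ (b - 1) * normPdf x *
    normCdf (l * x)

lemma normPdf_pos (x : ℝ) : 0 < normPdf x := by
  unfold normPdf
  positivity
lemma normPdf_cont : Continuous normPdf := by
  unfold normPdf
  fun_prop
lemma normPdf_integrable : Integrable normPdf := by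
  have h : Integrable fun x : ℝ => Real.exp (-(1/2) * x ^ 2) :=
    integrable_exp_neg_mul_sq (by norm_num)
  have : normPdf = fun x => Real.exp (-(1/2) * x ^ 2) / Real.sqrt (2 * Real.pi) := by
    funext x; unfold normPdf; ring_nf
  rw [this]
  exact h.div_const _
lemma normCdf_pos (x : ℝ) : 0 < normCdf x := by
  rw [normCdf, MeasureTheory.setIntegral_pos_iff_support_of_nonneg_ae]
  · have : Function.support normPdf = Set.univ := by
      ext t; simp [(normPdf_pos t).ne']
    rw [this, Set.univ_inter]
    simp [Real.volume_Iic]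
  · exact Filter.Eventually.of_forall fun t => (normPdf_pos t).le
  · exact normPdf_integrable.integrableOn
lemma normCdf_le (x : ℝ) : normCdf x ≤ ∫ t, normPdf t := by
  rw [normCdf]
  apply setIntegral_le_integral normPdf_integrable
  exact Filter.Eventually.of_forall fun t => (normPdf_pos t).le
lemma hasDerivAt_normCdf (x : ℝ) : HasDerivAt normCdf (normPdf x) x := by
  have key : ∀ y : ℝ, normCdf y = normCdf 0 + ∫ t in (0:ℝ)..y, normPdf t := by
    intro y
    rw [normCdf, normCdf, ← intervalIntegral.integral_Iic_sub_Iic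
      normPdf_integrable.integrableOn normPdf_integrable.integrableOn]
    ring
  have h : HasDerivAt (fun u => normCdf 0 + ∫ t in (0:ℝ)..u, normPdf t) (normPdf x) x := by
    apply HasDerivAt.const_add
    exact intervalIntegral.integral_hasDerivAt_right
      normPdf_integrable.intervalIntegrable
      (normPdf_cont.stronglyMeasurableAtFilter _ _) normPdf_cont.continuousAt
  exact h.congr_of_eventuallyEq (Filter.Eventually.of_forall key)
lemma tendsto_normCdf_atBot : Filter.Tendsto normCdf Filter.atBot (nhds 0) := by
  have h := MeasureTheory.intervalIntegral_tendsto_integral_Iic (0:ℝ)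
    (f := normPdf) (μ := volume) normPdf_integrable.integrableOn
    (Filter.tendsto_id (α := ℝ) (x := Filter.atBot))
  have heq : ∀ x : ℝ, normCdf x = normCdf 0 - ∫ t in x..(0:ℝ), normPdf t := by
    intro x
    rw [normCdf, normCdf, ← intervalIntegral.integral_Iic_sub_Iic
      normPdf_integrable.integrableOn normPdf_integrable.integrableOn]
    ring
  rw [show (0:ℝ) = normCdf 0 - normCdf 0 by ring]
  exact (Filter.Tendsto.const_sub _ h).congr fun x => (heq x).symm
lemma snCdf_one (x : ℝ) : snCdf 1 x = normCdf x ^ 2 := by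
  have hcont : Continuous normCdf := by
    rw [continuous_iff_continuousAt]
    exact fun y => (hasDerivAt_normCdf y).continuousAt
  have hderiv : ∀ t ∈ Set.Iic x, HasDerivAt (fun y => normCdf y ^ 2)
      (2 * normPdf t * normCdf (1 * t)) t := by
    intro t _
    have h := (hasDerivAt_normCdf t).pow 2
    exact h.congr_deriv (by simp; ring)
  have hint : IntegrableOn (fun t => 2 * normPdf t * normCdf (1 * t)) (Set.Iic x) := by
    apply Integrable.integrableOn
    apply Integrable.mono' ((normPdf_integrable.const_mul (2 * ∫ t, normPdf t)))
    · exact ((continuous_const.mul normPdf_cont).mul (hcont.comp (continuous_const.mul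
        continuous_id))).aestronglyMeasurable
    · refine Filter.Eventually.of_forall fun t => ?_
      have h1 : 0 ≤ normCdf (1 * t) := (normCdf_pos _).le
      have h2 : normCdf (1 * t) ≤ ∫ s, normPdf s := normCdf_le _
      have h3 : 0 < normPdf t := normPdf_pos t
      rw [Real.norm_eq_abs, abs_of_nonneg (by positivity)]
      nlinarith
  have htend : Filter.Tendsto (fun y => normCdf y ^ 2) Filter.atBot (nhds 0) := by
    simpa using (tendsto_normCdf_atBot.pow 2)
  have := MeasureTheory.integral_Iic_of_hasDerivAt_of_tendsto'
    hderiv hint htend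
  rw [snCdf, this, sub_zero]

/-- `BSN(1, 1/2, 1)` is the standard normal distribution. -/
theorem bsn_one_half_one (x : ℝ) : bsnPdf 1 (1/2) 1 x = normPdf x := by
  have hbeta : betaFn (1/2) 1 = 2 := by
    rw [betaFn]
    rw [show (1/2 : ℝ) + 1 = 1/2 + 1 by ring, Real.Gamma_add_one (by norm_num),
      Real.Gamma_one, Real.Gamma_one_half_eq]
    have : Real.sqrt Real.pi ≠ 0 := by positivity
    field_simp
  have hΦ : 0 < normCdf x := normCdf_pos x
  rw [bsnPdf, hbeta, snCdf_one, show (1:ℝ) * x = x by ring]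
  have h1 : ((normCdf x ^ 2 : ℝ) ^ ((1:ℝ)/2 - 1)) = (normCdf x)⁻¹ := by
    rw [show ((1:ℝ)/2 - 1) = -(1/2) by norm_num, ← Real.rpow_natCast (normCdf x) 2,
      ← Real.rpow_mul hΦ.le]
    norm_num
    rw [Real.rpow_neg_one]
  have h2 : ((1 - normCdf x ^ 2 : ℝ) ^ ((1:ℝ) - 1)) = 1 := by
    rw [sub_self, Real.rpow_zero]
  rw [h1, h2]
  field_simp
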